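/- For all nonnegative reals x₁, x₂, x₃, if (x₁+x₂+x₃)⁴ - 8(x₁x₂³ + x₁x₃³ + x₂x₃³) - 24x₁x₂x₃(x₁+x₂) = 0, then x₁ = x₂ = x₃ = 0. -/
import Mathlib


theorem stmt_6 (x₁ x₂ x₃ : ℝ) (h₁ : 0 ≤ x₁) (h₂ : 0 ≤ x₂) (h₃ : 0 ≤ x₃)
    (h : (x₁+x₂+x₃)^4 - 8*(x₁*x₂^3 + x₁*x₃^3 + x₂*x₃^3) - 24*x₁*x₂*x₃*(x₁+x₂) = 0) :
    x₁ = 0 ∧ x₂ = 0 ∧ x₃ = 0 := by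
  have h2 : ((x₁+x₂+x₃)^4 - 8*(x₁*x₂^3 + x₁*x₃^3 + x₂*x₃^3)
      - 24*x₁*x₂*x₃*(x₁+x₂)) * (x₁+x₂+x₃)^2 = 0 := by rw [h]; ring
  have t1 : 0 ≤ x₁*x₂*(x₁^2 - x₁*x₃ - x₂*x₃)^2 := mul_nonneg (mul_nonneg h₁ h₂) (sq_nonneg _)
  have t2 : 0 ≤ x₂*x₃*(x₁^2 - x₂^2 + x₁*x₂)^2 := mul_nonneg (mul_nonneg h₂ h₃) (sq_nonneg _)
  have t3 : 0 ≤ x₂*x₃*(x₃^2 - 2*x₁*x₃ - 2*x₂*x₃)^2 := mul_nonneg (mul_nonneg h₂ h₃) (sq_nonneg _)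
  have t4 : 0 ≤ x₃^2*(2*x₁^2 - x₃^2 + 2*x₁*x₃)^2 := mul_nonneg (sq_nonneg _) (sq_nonneg _)
  have t5 : 0 ≤ x₂^2*(2*x₁^2 - x₂^2 + 2*x₁*x₂)^2 := mul_nonneg (sq_nonneg _) (sq_nonneg _)
  have t6 : 0 ≤ x₁*x₃*(2*x₁^2 + x₃^2 - 2*x₁*x₃)^2 := mul_nonneg (mul_nonneg h₁ h₃) (sq_nonneg _)
  have t7 : 0 ≤ x₂^2*(x₁^2 + x₁*x₂ - x₂*x₃)^2 := mul_nonneg (sq_nonneg _) (sq_nonneg _)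
  have t8 : 0 ≤ x₂^2*(x₂^2 + x₁*x₂ + x₂*x₃)^2 := mul_nonneg (sq_nonneg _) (sq_nonneg _)
  have t9 : 0 ≤ x₃^2*(x₁^2 + x₁*x₃ - x₂*x₃)^2 := mul_nonneg (sq_nonneg _) (sq_nonneg _)
  have t10 : 0 ≤ x₂^2*(x₁^2 - x₁*x₃ - x₂*x₃)^2 := mul_nonneg (sq_nonneg _) (sq_nonneg _)
  have t11 : 0 ≤ x₁*x₂*(2*x₁^2 + x₂^2 - 2*x₁*x₂)^2 := mul_nonneg (mul_nonneg h₁ h₂) (sq_nonneg _)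
  have t12 : 0 ≤ x₃^2*(x₁^2 - x₂^2 + x₁*x₂)^2 := mul_nonneg (sq_nonneg _) (sq_nonneg _)
  have t13 : 0 ≤ x₁*x₂*(x₁^2 + x₁*x₃ - x₂*x₃)^2 := mul_nonneg (mul_nonneg h₁ h₂) (sq_nonneg _)
  have t14 : 0 ≤ x₁*x₃*(x₁^2 + x₁*x₂ + x₁*x₃)^2 := mul_nonneg (mul_nonneg h₁ h₃) (sq_nonneg _)
  have t15 : 0 ≤ x₁*x₃*(x₁^2 - x₁*x₂ + x₁*x₃)^2 := mul_nonneg (mul_nonneg h₁ h₃) (sq_nonneg _)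
  have t16 : 0 ≤ x₁*x₃*(x₂^2 - x₁*x₃ - x₂*x₃)^2 := mul_nonneg (mul_nonneg h₁ h₃) (sq_nonneg _)
  have t17 : 0 ≤ x₂*x₃*(x₁^2 - x₁*x₃ - x₂*x₃)^2 := mul_nonneg (mul_nonneg h₂ h₃) (sq_nonneg _)
  have t18 : 0 ≤ x₁*x₃*(x₁^2 - x₁*x₂ + x₂*x₃)^2 := mul_nonneg (mul_nonneg h₁ h₃) (sq_nonneg _)
  have t19 : 0 ≤ x₂*x₃*(x₁^2 - x₂^2 + x₂*x₃)^2 := mul_nonneg (mul_nonneg h₂ h₃) (sq_nonneg _)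
  have t20 : 0 ≤ x₃^2*(2*x₂^2 - x₃^2 + 2*x₂*x₃)^2 := mul_nonneg (sq_nonneg _) (sq_nonneg _)
  have t21 : 0 ≤ x₁*x₃*(x₃^2 - 2*x₁*x₃ - 2*x₂*x₃)^2 := mul_nonneg (mul_nonneg h₁ h₃) (sq_nonneg _)
  have t22 : 0 ≤ x₁^2*(x₁^2 + x₁*x₂ - x₁*x₃)^2 := mul_nonneg (sq_nonneg _) (sq_nonneg _)
  have t23 : 0 ≤ x₂^2*(x₁^2 - x₂^2 + x₁*x₂)^2 := mul_nonneg (sq_nonneg _) (sq_nonneg _)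
  have t24 : 0 ≤ x₁^2*(x₁^2 + x₁*x₂ + x₁*x₃)^2 := mul_nonneg (sq_nonneg _) (sq_nonneg _)
  have t25 : 0 ≤ x₂*x₃*(x₁^2 + x₂^2 - x₁*x₂)^2 := mul_nonneg (mul_nonneg h₂ h₃) (sq_nonneg _)
  have t26 : 0 ≤ x₃^2*(x₃^2 - 2*x₁*x₃ - 2*x₂*x₃)^2 := mul_nonneg (sq_nonneg _) (sq_nonneg _)
  have t27 : 0 ≤ x₂*x₃*(x₁^2 + x₁*x₃ - x₂*x₃)^2 := mul_nonneg (mul_nonneg h₂ h₃) (sq_nonneg _)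
  have t28 : 0 ≤ x₁*x₂*(x₁^2 - x₂^2 + x₁*x₂)^2 := mul_nonneg (mul_nonneg h₁ h₂) (sq_nonneg _)
  have e1 : x₁^6 = 0 := le_antisymm
    (by linarith [t1,t2,t3,t4,t5,t6,t7,t8,t9,t10,t11,t12,t13,t14,t15,t16,t17,t18,t19,t20,
        t21,t22,t23,t24,t25,t26,t27,t28, sq_nonneg (x₂^3), sq_nonneg (x₃^3)])
    (by positivity)
  have e2 : x₂^6 = 0 := le_antisymm
    (by linarith [t1,t2,t3,t4,t5,t6,t7,t8,t9,t10,t11,t12,t13,t14,t15,t16,t17,t18,t19,t20,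
        t21,t22,t23,t24,t25,t26,t27,t28, sq_nonneg (x₁^3), sq_nonneg (x₃^3)])
    (by positivity)
  have e3 : x₃^6 = 0 := le_antisymm
    (by linarith [t1,t2,t3,t4,t5,t6,t7,t8,t9,t10,t11,t12,t13,t14,t15,t16,t17,t18,t19,t20,
        t21,t22,t23,t24,t25,t26,t27,t28, sq_nonneg (x₁^3), sq_nonneg (x₂^3)])
    (by positivity)
  exact ⟨pow_eq_zero_iff (by norm_num) |>.mp e1,
         pow_eq_zero_iff (by norm_num) |>.mp e2,
         pow_eq_zero_iff (by norm_num) |>.mp e3⟩
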